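/- Let 0 < p ≤ q ≤ 1 with p < 1. Define μ'(λ) = (p/q)·(λ^{p+q}·sin((q−p)π) − λ^q·sin(qπ) + λ^p·sin(pπ)) / (π·(λ^{2p} − 2·λ^p·cos(pπ) + 1)) for λ > 0. Then μ'(λ) ≥ 0 for all λ > 0, and the integrals ∫_0^1 μ'(λ)/λ dλ and ∫_0^∞ μ'(λ)/(λ^2 + 1) dλ are finite. -/

import Mathlib

open Real Set MeasureTheory

lemma phi_nonneg {x : ℝ} (hx : 0 ≤ x) (hxpi : x ≤ π) :
    0 ≤ 2*x*Real.sin x - Real.sin x ^ 2 - x^2 * Real.cos x := by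
  set f : ℝ → ℝ := fun y => 2*y*Real.sin y - Real.sin y ^ 2 - y^2 * Real.cos y with hf
  have hmono : MonotoneOn f (Icc 0 π) := by
    apply monotoneOn_of_deriv_nonneg (convex_Icc 0 π)
    · fun_prop
    · intro y hy
      apply DifferentiableAt.differentiableWithinAt
      fun_prop
    · intro y hy
      rw [interior_Icc] at hy
      have hd : HasDerivAt f (Real.sin y * (2 - 2*Real.cos y + y^2)) y := by
        have h1 : HasDerivAt f (2*Real.sin y + 2*y*Real.cos y
            - 2*Real.sin y*Real.cos y - (2*y*Real.cos y - y^2*Real.sin y)) y := by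
          apply HasDerivAt.sub
          apply HasDerivAt.sub
          · simpa [mul_comm] using ((hasDerivAt_id y).const_mul 2).fun_mul (Real.hasDerivAt_sin y)
          · have := ((Real.hasDerivAt_sin y).fun_pow 2)
            simpa [mul_comm, mul_assoc, mul_left_comm] using this
          · have := ((hasDerivAt_pow 2 y).fun_mul (Real.hasDerivAt_cos y))
            simpa [mul_comm, mul_assoc, mul_left_comm, sub_eq_add_neg] using this
        convert h1 using 1; ring
      rw [hd.deriv]
      have hs : 0 ≤ Real.sin y := Real.sin_nonneg_of_nonneg_of_le_pi hy.1.le hy.2.le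
      have : 0 ≤ 2 - 2*Real.cos y + y^2 := by nlinarith [Real.cos_le_one y, sq_nonneg y]
      positivity
  have h0 : f 0 = 0 := by simp [hf]
  have h1 := hmono (left_mem_Icc.2 Real.pi_pos.le) ⟨hx, hxpi⟩ hx
  rw [h0] at h1
  exact h1

lemma keyC {x : ℝ} (hx : 0 < x) (hxpi : x < π) (t : ℝ) :
    t * Real.sin x + x * Real.cos x ≤ x * Real.exp t := by
  set s := Real.sin x with hs
  have hs0 : 0 < s := Real.sin_pos_of_pos_of_lt_pi hx hxpi
  have hsx : s ≤ x := by
    have := Real.sin_lt hx; linarith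
  -- exp t ≥ (s/x) * (1 + (t - log (s/x)))
  have h1 : (s/x) * (1 + (t - Real.log (s/x))) ≤ Real.exp t := by
    have h2 : (1 + (t - Real.log (s/x))) ≤ Real.exp (t - Real.log (s/x)) := by
      have := Real.add_one_le_exp (t - Real.log (s/x)); linarith
    have h3 : Real.exp (t - Real.log (s/x)) = Real.exp t / (s/x) := by
      rw [Real.exp_sub, Real.exp_log (by positivity)]
    calc (s/x) * (1 + (t - Real.log (s/x))) ≤ (s/x) * Real.exp (t - Real.log (s/x)) := by
          apply mul_le_mul_of_nonneg_left h2 (by positivity)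
      _ = Real.exp t := by
          rw [h3]; field_simp
  have hlog : Real.log (s/x) ≤ s/x - 1 := Real.log_le_sub_one_of_pos (by positivity)
  have hphi := phi_nonneg hx.le hxpi.le
  -- x * exp t ≥ s * (1 + t - log(s/x)) ≥ s*t + 2s - s^2/x ≥ s*t + x*cos x
  have h4 : s * (1 + (t - Real.log (s/x))) ≤ x * Real.exp t := by
    calc s * (1 + (t - Real.log (s/x))) = x * ((s/x) * (1 + (t - Real.log (s/x)))) := by
          field_simp
      _ ≤ x * Real.exp t := by apply mul_le_mul_of_nonneg_left h1 hx.le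
  have h5 : s*t + 2*s - s^2/x ≤ s * (1 + (t - Real.log (s/x))) := by
    have : s * Real.log (s/x) ≤ s * (s/x - 1) := mul_le_mul_of_nonneg_left hlog hs0.le
    have hsq : s * (s/x) = s^2/x := by field_simp
    nlinarith
  have h6 : x * Real.cos x ≤ 2*s - s^2/x := by
    have h7 : 0 ≤ 2*x*s - s^2 - x^2*Real.cos x := hphi
    have h8 : s^2/x * x = s^2 := by field_simp
    nlinarith [sq_nonneg s]
  linarith


section G
variable (c : ℝ)

noncomputable def gfun (c : ℝ) : ℝ → ℝ :=
  fun s => (Real.exp (s*c) * Real.cos (s*π) - 1) / (Real.exp (s*c) * Real.sin (s*π))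

lemma gfun_hasDerivAt {s : ℝ} (hs0 : 0 < s) (hs1 : s < 1) :
    HasDerivAt (gfun c)
      (((Real.exp (s*c)*c*Real.cos (s*π) + Real.exp (s*c)*(-Real.sin (s*π)*π)) * (Real.exp (s*c) * Real.sin (s*π))
        - (Real.exp (s*c) * Real.cos (s*π) - 1) * (Real.exp (s*c)*c*Real.sin (s*π) + Real.exp (s*c)*(Real.cos (s*π)*π)))
        / (Real.exp (s*c) * Real.sin (s*π))^2) s := by
  have hlin : HasDerivAt (fun y : ℝ => y * c) c s := by
    simpa using (hasDerivAt_id s).mul_const c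
  have hlinπ : HasDerivAt (fun y : ℝ => y * π) π s := by
    simpa using (hasDerivAt_id s).mul_const π
  have he : HasDerivAt (fun y : ℝ => Real.exp (y*c)) (Real.exp (s*c) * c) s := hlin.exp
  have hsin : HasDerivAt (fun y : ℝ => Real.sin (y*π)) (Real.cos (s*π) * π) s := hlinπ.sin
  have hcos : HasDerivAt (fun y : ℝ => Real.cos (y*π)) (-Real.sin (s*π) * π) s := hlinπ.cos
  have hden_ne : Real.exp (s*c) * Real.sin (s*π) ≠ 0 := by
    have : 0 < Real.sin (s*π) := Real.sin_pos_of_pos_of_lt_pi (by positivity)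
      (by nlinarith [Real.pi_pos])
    positivity
  have hnum : HasDerivAt (fun y : ℝ => Real.exp (y*c) * Real.cos (y*π) - 1)
      (Real.exp (s*c)*c*Real.cos (s*π) + Real.exp (s*c)*(-Real.sin (s*π)*π)) s := by
    simpa [mul_assoc] using (he.mul hcos).sub_const 1
  have hden : HasDerivAt (fun y : ℝ => Real.exp (y*c) * Real.sin (y*π))
      (Real.exp (s*c)*c*Real.sin (s*π) + Real.exp (s*c)*(Real.cos (s*π)*π)) s := by
    simpa [mul_assoc] using he.fun_mul hsin
  exact hnum.div hden hden_ne

lemma gfun_antitone : AntitoneOn (gfun c) (Ioo 0 1) := by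
  have hderiv : ∀ s ∈ Ioo (0:ℝ) 1, HasDerivAt (gfun c) _ s := fun s hs =>
    gfun_hasDerivAt c hs.1 hs.2
  apply antitoneOn_of_deriv_nonpos (convex_Ioo 0 1)
  · exact fun s hs => ((gfun_hasDerivAt c hs.1 hs.2).differentiableAt).continuousAt.continuousWithinAt
  · rw [interior_Ioo]
    exact fun s hs => ((gfun_hasDerivAt c hs.1 hs.2).differentiableAt).differentiableWithinAt
  · rw [interior_Ioo]
    intro s hs
    rw [(gfun_hasDerivAt c hs.1 hs.2).deriv]
    have hs0 := hs.1
    have hs1 := hs.2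
    have hx0 : (0:ℝ) < s*π := by positivity
    have hxpi : s*π < π := by nlinarith [Real.pi_pos]
    have hkey := keyC hx0 hxpi (s*c)
    -- divide by s : c*sin + π*cos ≤ π * exp(s*c)
    have hkey2 : c * Real.sin (s*π) + π * Real.cos (s*π) ≤ π * Real.exp (s*c) := by
      have h2 : s * (c * Real.sin (s*π) + π * Real.cos (s*π)) ≤ s * (π * Real.exp (s*c)) := by
        linear_combination hkey
      exact le_of_mul_le_mul_left h2 hs0
    apply div_nonpos_of_nonpos_of_nonneg _ (sq_nonneg _)
    have hpyth := Real.sin_sq_add_cos_sq (s*π)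
    have hexp : 0 < Real.exp (s*c) := Real.exp_pos _
    have hid : (Real.exp (s*c)*c*Real.cos (s*π) + Real.exp (s*c)*(-Real.sin (s*π)*π)) * (Real.exp (s*c) * Real.sin (s*π))
        - (Real.exp (s*c) * Real.cos (s*π) - 1) * (Real.exp (s*c)*c*Real.sin (s*π) + Real.exp (s*c)*(Real.cos (s*π)*π))
        = Real.exp (s*c) * ((c*Real.sin (s*π) + π*Real.cos (s*π)) - π*Real.exp (s*c)) := by
      linear_combination (-(π * Real.exp (s*c)^2)) * hpyth
    rw [hid]
    exact mul_nonpos_of_nonneg_of_nonpos hexp.le (by linarith)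
  end G


lemma num_nonneg {p q : ℝ} (hp : 0 < p) (hpq : p ≤ q) (hq : q ≤ 1) (hp1 : p < 1)
    {l : ℝ} (hl : 0 < l) :
    0 ≤ l ^ (p + q) * Real.sin ((q - p) * π) - l ^ q * Real.sin (q * π)
        + l ^ p * Real.sin (p * π) := by
  have hsp : 0 < Real.sin (p * π) := Real.sin_pos_of_pos_of_lt_pi (by positivity)
    (by nlinarith [Real.pi_pos])
  rcases eq_or_lt_of_le hq with hq1 | hq1
  · -- q = 1
    subst hq1
    have h1 : Real.sin ((1 - p) * π) = Real.sin (p * π) := by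
      rw [sub_mul, one_mul, Real.sin_pi_sub]
    have h2 : Real.sin ((1:ℝ) * π) = 0 := by simp
    rw [h1, h2]
    have : 0 ≤ l ^ (p + 1) * Real.sin (p * π) := by positivity
    have : 0 ≤ l ^ p * Real.sin (p * π) := by positivity
    nlinarith [Real.rpow_pos_of_pos hl (p+1), Real.rpow_pos_of_pos hl p]
  · -- q < 1
    set c := Real.log l with hc
    have hrw : ∀ s : ℝ, l ^ s = Real.exp (s * c) := fun s => by
      rw [Real.rpow_def_of_pos hl, mul_comm]
    have hq0 : 0 < q := lt_of_lt_of_le hp hpq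
    have hsq : 0 < Real.sin (q * π) := Real.sin_pos_of_pos_of_lt_pi
      (mul_pos hq0 Real.pi_pos) (by nlinarith [Real.pi_pos])
    have hgap : gfun c q ≤ gfun c p :=
      gfun_antitone c ⟨hp, lt_of_le_of_lt hpq hq1⟩ ⟨lt_of_lt_of_le hp hpq, hq1⟩ hpq
    have hA : 0 < Real.exp (p*c) * Real.sin (p*π) := by positivity
    have hB : 0 < Real.exp (q*c) * Real.sin (q*π) := by positivity
    have key : 0 ≤ (Real.exp (p*c) * Real.sin (p*π)) * ((Real.exp (q*c) * Real.sin (q*π))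
        * (gfun c p - gfun c q)) :=
      mul_nonneg hA.le (mul_nonneg hB.le (by linarith))
    have hid : (Real.exp (p*c) * Real.sin (p*π)) * ((Real.exp (q*c) * Real.sin (q*π))
        * (gfun c p - gfun c q))
        = l ^ (p + q) * Real.sin ((q - p) * π) - l ^ q * Real.sin (q * π)
          + l ^ p * Real.sin (p * π) := by
      rw [hrw, hrw, hrw, show (q - p) * π = q*π - p*π by ring, Real.sin_sub,
        show (p + q) * c = p*c + q*c by ring, Real.exp_add]
      unfold gfun
      have hsq' : Real.sin (π * q) ≠ 0 := by rw [mul_comm]; exact hsq.ne'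
      have hsp' : Real.sin (π * p) ≠ 0 := by rw [mul_comm]; exact hsp.ne'
      field_simp
      ring
    rw [hid] at key
    exact key

lemma den_pos {p : ℝ} (hp : 0 < p) (hp1 : p < 1) {l : ℝ} (hl : 0 < l) :
    Real.sin (p*π)^2 ≤ l ^ (2*p) - 2 * l ^ p * Real.cos (p * π) + 1 := by
  have h2p : l ^ (2*p) = (l ^ p)^2 := by
    rw [show 2*p = p*2 by ring, Real.rpow_mul hl.le]
    norm_num
  have hpyth := Real.sin_sq_add_cos_sq (p*π)
  rw [h2p]
  nlinarith [sq_nonneg (l ^ p - Real.cos (p*π))]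


set_option maxHeartbeats 2000000 in
theorem stmt_17 (p q : ℝ) (hp : 0 < p) (hpq : p ≤ q) (hq : q ≤ 1) (hp1 : p < 1)
    (μ' : ℝ → ℝ)
    (hμ : ∀ l : ℝ, μ' l =
      p / q * (l ^ (p + q) * Real.sin ((q - p) * π) - l ^ q * Real.sin (q * π)
          + l ^ p * Real.sin (p * π)) /
        (π * (l ^ (2 * p) - 2 * l ^ p * Real.cos (p * π) + 1))) :
    (∀ l : ℝ, 0 < l → 0 ≤ μ' l) ∧
      MeasureTheory.IntegrableOn (fun l => μ' l / l) (Set.Ioc 0 1) ∧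
      MeasureTheory.IntegrableOn (fun l => μ' l / (l ^ 2 + 1)) (Set.Ioi 0) := by
  have hq0 : 0 < q := lt_of_lt_of_le hp hpq
  have hsp : 0 < Real.sin (p*π) := Real.sin_pos_of_pos_of_lt_pi (by positivity)
    (by nlinarith [Real.pi_pos])
  have hπ := Real.pi_pos
  have hDpos : ∀ l : ℝ, 0 < l → 0 < l ^ (2 * p) - 2 * l ^ p * Real.cos (p * π) + 1 :=
    fun l hl => lt_of_lt_of_le (by positivity) (den_pos hp hp1 hl)
  -- nonnegativity
  have hnonneg : ∀ l : ℝ, 0 < l → 0 ≤ μ' l := by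
    intro l hl
    rw [hμ l]
    have h1 := num_nonneg hp hpq hq hp1 hl
    have h2 := hDpos l hl
    have h3 : 0 < p/q := by positivity
    positivity
  -- continuity of μ' on Ioi 0
  have hrpow : ∀ r : ℝ, ContinuousOn (fun l : ℝ => l ^ r) (Ioi (0:ℝ)) := fun r =>
    ContinuousOn.rpow_const continuousOn_id (fun x hx => Or.inl (ne_of_gt hx))
  have hcontμ : ContinuousOn μ' (Ioi 0) := by
    have hD : ContinuousOn
        (fun l : ℝ => π * (l ^ (2*p) - 2 * l ^ p * Real.cos (p*π) + 1)) (Ioi 0) :=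
      continuousOn_const.mul (((hrpow (2*p)).sub
        ((continuousOn_const.mul (hrpow p)).mul continuousOn_const)).add continuousOn_const)
    have hN : ContinuousOn
        (fun l : ℝ => p / q * (l ^ (p + q) * Real.sin ((q - p) * π)
          - l ^ q * Real.sin (q * π) + l ^ p * Real.sin (p * π))) (Ioi 0) :=
      continuousOn_const.mul ((((hrpow (p+q)).mul continuousOn_const).sub
        ((hrpow q).mul continuousOn_const)).add ((hrpow p).mul continuousOn_const))
    exact ContinuousOn.congr (hN.div hD
      (fun l hl => ne_of_gt (mul_pos hπ (hDpos l hl)))) (fun l _ => hμ l)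
  -- constants
  obtain ⟨C1, hC1⟩ : ∃ C1:ℝ, C1 = p/q*3/(π*Real.sin (p*π)^2) := ⟨_, rfl⟩
  have hC1pos : 0 < C1 := by rw [hC1]; positivity
  have hcos1 : Real.cos (p*π) < 1 := by
    nlinarith [Real.sin_sq_add_cos_sq (p*π), Real.neg_one_le_cos (p*π), mul_pos hsp hsp]
  obtain ⟨m, hm⟩ : ∃ m:ℝ, m = min 1 ((1 - Real.cos (p*π))^2) := ⟨_, rfl⟩
  have hmpos : 0 < m := hm ▸ lt_min one_pos (pow_pos (by linarith) 2)
  obtain ⟨C2, hC2⟩ : ∃ C2:ℝ, C2 = p/q*3/(π*m) := ⟨_, rfl⟩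
  have hC2pos : 0 < C2 := by rw [hC2]; positivity
  -- bound on (0,1]
  have hb1 : ∀ l ∈ Ioc (0:ℝ) 1, |μ' l| ≤ C1 * l ^ p := by
    rintro l ⟨hl, hl1⟩
    have e1 : l ^ (p+q) ≤ l ^ p := Real.rpow_le_rpow_of_exponent_ge hl hl1 (by linarith)
    have e2 : l ^ q ≤ l ^ p := Real.rpow_le_rpow_of_exponent_ge hl hl1 hpq
    have hlp : (0:ℝ) < l ^ p := Real.rpow_pos_of_pos hl p
    have hlpq : (0:ℝ) < l ^ (p+q) := Real.rpow_pos_of_pos hl _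
    have hlq : (0:ℝ) < l ^ q := Real.rpow_pos_of_pos hl q
    have t1 : |l ^ (p+q) * Real.sin ((q-p)*π)| ≤ l ^ (p+q) := by
      rw [abs_mul, abs_of_pos hlpq]
      exact mul_le_of_le_one_right hlpq.le (Real.abs_sin_le_one _)
    have t2 : |l ^ q * Real.sin (q*π)| ≤ l ^ q := by
      rw [abs_mul, abs_of_pos hlq]
      exact mul_le_of_le_one_right hlq.le (Real.abs_sin_le_one _)
    have t3 : |l ^ p * Real.sin (p*π)| ≤ l ^ p := by
      rw [abs_mul, abs_of_pos hlp]
      exact mul_le_of_le_one_right hlp.le (Real.abs_sin_le_one _)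
    have hNb : |l ^ (p + q) * Real.sin ((q - p) * π) - l ^ q * Real.sin (q * π)
        + l ^ p * Real.sin (p * π)| ≤ 3 * l ^ p := by
      calc |l ^ (p + q) * Real.sin ((q - p) * π) - l ^ q * Real.sin (q * π)
            + l ^ p * Real.sin (p * π)|
          ≤ |l ^ (p + q) * Real.sin ((q - p) * π) - l ^ q * Real.sin (q * π)|
            + |l ^ p * Real.sin (p * π)| := abs_add_le _ _
        _ ≤ |l ^ (p + q) * Real.sin ((q - p) * π)| + |l ^ q * Real.sin (q * π)|
            + |l ^ p * Real.sin (p * π)| := by linarith [abs_sub (l ^ (p+q) * Real.sin ((q-p)*π)) (l ^ q * Real.sin (q*π))]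
        _ ≤ 3 * l ^ p := by linarith
    rw [hμ l, abs_div, abs_mul, abs_of_pos (show (0:ℝ) < p/q by positivity),
      abs_of_pos (mul_pos hπ (hDpos l hl))]
    calc p/q * |l ^ (p + q) * Real.sin ((q - p) * π) - l ^ q * Real.sin (q * π)
          + l ^ p * Real.sin (p * π)| / (π * (l ^ (2*p) - 2 * l ^ p * Real.cos (p*π) + 1))
        ≤ p/q * (3 * l ^ p) / (π * Real.sin (p*π)^2) := by
          apply div_le_div₀ (by positivity)
            (mul_le_mul_of_nonneg_left hNb (by positivity)) (by positivity)
            (mul_le_mul_of_nonneg_left (den_pos hp hp1 hl) hπ.le)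
      _ = C1 * l ^ p := by rw [hC1]; ring
  -- bound on [1,∞)
  have hb2 : ∀ l ∈ Ioi (1:ℝ), |μ' l| ≤ C2 * l ^ (q - p) := by
    intro l hl1
    have hl : (0:ℝ) < l := lt_trans one_pos hl1
    have hu : (1:ℝ) ≤ l ^ p := by
      have := Real.rpow_le_rpow_of_exponent_le hl1.le (show (0:ℝ) ≤ p from hp.le)
      simpa using this
    have hlp : (0:ℝ) < l ^ p := Real.rpow_pos_of_pos hl p
    have hlpq : (0:ℝ) < l ^ (p+q) := Real.rpow_pos_of_pos hl _
    have h2p : l ^ (2*p) = (l ^ p)^2 := by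
      rw [show 2*p = p*2 by ring, Real.rpow_mul hl.le]
      norm_num
    have hD2 : m * (l ^ p)^2 ≤ l ^ (2*p) - 2 * l ^ p * Real.cos (p*π) + 1 := by
      rw [h2p]
      rcases le_or_gt (Real.cos (p*π)) 0 with hco | hco
      · have h1 : m ≤ 1 := hm ▸ min_le_left _ _
        nlinarith
      · have h1 : m ≤ (1 - Real.cos (p*π))^2 := hm ▸ min_le_right _ _
        have h3 : Real.cos (p*π) ≤ l ^ p * Real.cos (p*π) := by nlinarith
        have h4 : 0 ≤ l ^ p * (1 - Real.cos (p*π)) := by nlinarith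
        have h5 : l ^ p * (1 - Real.cos (p*π)) ≤ l ^ p - Real.cos (p*π) := by nlinarith
        have h6 : (l ^ p * (1 - Real.cos (p*π)))^2 ≤ (l ^ p - Real.cos (p*π))^2 :=
          pow_le_pow_left₀ h4 h5 2
        have h7 : Real.cos (p*π)^2 ≤ 1 := by nlinarith [Real.neg_one_le_cos (p*π)]
        have h8 : m * (l ^ p)^2 ≤ (l ^ p * (1 - Real.cos (p*π)))^2 := by
          nlinarith [mul_le_mul_of_nonneg_right h1 (sq_nonneg (l ^ p))]
        have h9 : (l ^ p - Real.cos (p*π))^2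
            = (l ^ p)^2 - 2 * l ^ p * Real.cos (p*π) + Real.cos (p*π)^2 := by ring
        linarith [h6, h7, h8]
    have e1 : l ^ q ≤ l ^ (p+q) := Real.rpow_le_rpow_of_exponent_le hl1.le (by linarith)
    have e2 : l ^ p ≤ l ^ (p+q) := Real.rpow_le_rpow_of_exponent_le hl1.le (by linarith)
    have hlq : (0:ℝ) < l ^ q := Real.rpow_pos_of_pos hl q
    have t1 : |l ^ (p+q) * Real.sin ((q-p)*π)| ≤ l ^ (p+q) := by
      rw [abs_mul, abs_of_pos hlpq]
      exact mul_le_of_le_one_right hlpq.le (Real.abs_sin_le_one _)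
    have t2 : |l ^ q * Real.sin (q*π)| ≤ l ^ q := by
      rw [abs_mul, abs_of_pos hlq]
      exact mul_le_of_le_one_right hlq.le (Real.abs_sin_le_one _)
    have t3 : |l ^ p * Real.sin (p*π)| ≤ l ^ p := by
      rw [abs_mul, abs_of_pos hlp]
      exact mul_le_of_le_one_right hlp.le (Real.abs_sin_le_one _)
    have hNb : |l ^ (p + q) * Real.sin ((q - p) * π) - l ^ q * Real.sin (q * π)
        + l ^ p * Real.sin (p * π)| ≤ 3 * l ^ (p+q) := by
      calc |l ^ (p + q) * Real.sin ((q - p) * π) - l ^ q * Real.sin (q * π)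
            + l ^ p * Real.sin (p * π)|
          ≤ |l ^ (p + q) * Real.sin ((q - p) * π) - l ^ q * Real.sin (q * π)|
            + |l ^ p * Real.sin (p * π)| := abs_add_le _ _
        _ ≤ |l ^ (p + q) * Real.sin ((q - p) * π)| + |l ^ q * Real.sin (q * π)|
            + |l ^ p * Real.sin (p * π)| := by linarith [abs_sub (l ^ (p+q) * Real.sin ((q-p)*π)) (l ^ q * Real.sin (q*π))]
        _ ≤ 3 * l ^ (p+q) := by linarith
    have hsplit : l ^ (p+q) = l ^ (q-p) * (l ^ p)^2 := by
      rw [← h2p, ← Real.rpow_add hl]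
      congr 1; ring
    rw [hμ l, abs_div, abs_mul, abs_of_pos (show (0:ℝ) < p/q by positivity),
      abs_of_pos (mul_pos hπ (hDpos l hl))]
    calc p/q * |l ^ (p + q) * Real.sin ((q - p) * π) - l ^ q * Real.sin (q * π)
          + l ^ p * Real.sin (p * π)| / (π * (l ^ (2*p) - 2 * l ^ p * Real.cos (p*π) + 1))
        ≤ p/q * (3 * l ^ (p+q)) / (π * (m * (l ^ p)^2)) := by
          apply div_le_div₀ (by positivity)
            (mul_le_mul_of_nonneg_left hNb (by positivity)) (by positivity)
            (mul_le_mul_of_nonneg_left hD2 hπ.le)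
      _ = C2 * l ^ (q - p) := by
          have hu2 : ((l ^ p)^2 : ℝ) ≠ 0 := by positivity
          rw [hC2, hsplit,
            show p/q*(3*(l ^ (q-p)*(l ^ p)^2)) = (p/q*3*l ^ (q-p))*(l ^ p)^2 from by ring,
            show π*(m*(l ^ p)^2) = (π*m)*(l ^ p)^2 from by ring,
            mul_div_mul_right _ _ hu2, mul_div_right_comm]
  refine ⟨hnonneg, ?_, ?_⟩
  · -- ∫ μ'/l on Ioc 0 1
    have hg : IntegrableOn (fun l : ℝ => C1 * l ^ (p-1)) (Ioc 0 1) := by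
      have h := intervalIntegral.intervalIntegrable_rpow' (show (-1:ℝ) < p - 1 by linarith) (a := 0) (b := 1)
      rw [intervalIntegrable_iff, uIoc_of_le zero_le_one] at h
      exact h.const_mul C1
    apply Integrable.mono' hg
    · exact ((hcontμ.mono Ioc_subset_Ioi_self).div (continuousOn_id)
        (fun x hx => ne_of_gt hx.1)).aestronglyMeasurable measurableSet_Ioc
    · rw [ae_restrict_iff' measurableSet_Ioc]
      filter_upwards with l hl
      have hl0 := hl.1
      rw [norm_div, Real.norm_eq_abs, Real.norm_eq_abs, abs_of_pos hl0]
      calc |μ' l| / l ≤ C1 * l ^ p / l := (div_le_div_iff_of_pos_right hl0).mpr (hb1 l hl)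
        _ = C1 * l ^ (p-1) := by
            rw [Real.rpow_sub hl0, Real.rpow_one, mul_div_assoc]
  · -- ∫ μ'/(l²+1) on Ioi 0
    rw [← Ioc_union_Ioi_eq_Ioi (zero_le_one (α := ℝ))]
    apply IntegrableOn.union
    · -- on Ioc 0 1 : bounded by C1
      have hgc : IntegrableOn (fun _ : ℝ => C1) (Ioc (0:ℝ) 1) :=
        integrableOn_const measure_Ioc_lt_top.ne
      apply Integrable.mono' hgc
      · exact ((hcontμ.mono Ioc_subset_Ioi_self).div
          ((continuousOn_id.pow 2).add continuousOn_const)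
          (fun x hx => (add_pos_of_nonneg_of_pos (sq_nonneg _) one_pos).ne')).aestronglyMeasurable measurableSet_Ioc
      · rw [ae_restrict_iff' measurableSet_Ioc]
        filter_upwards with l hl
        have hl0 := hl.1
        have hden : (1:ℝ) ≤ l^2 + 1 := by nlinarith
        rw [norm_div, Real.norm_eq_abs, Real.norm_eq_abs,
          abs_of_pos (show (0:ℝ) < l^2+1 by positivity)]
        have h1 : |μ' l| / (l^2+1) ≤ |μ' l| := by
          apply div_le_self (abs_nonneg _) hden
        have h2 : l ^ p ≤ 1 := Real.rpow_le_one hl0.le hl.2 hp.le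
        calc |μ' l| / (l^2+1) ≤ |μ' l| := h1
          _ ≤ C1 * l ^ p := hb1 l hl
          _ ≤ C1 := by nlinarith
    · -- on Ioi 1
      have hg : IntegrableOn (fun l : ℝ => C2 * l ^ (q-p-2)) (Ioi 1) :=
        (integrableOn_Ioi_rpow_of_lt (show q-p-2 < -1 by linarith) one_pos).const_mul C2
      apply Integrable.mono' hg
      · exact ((hcontμ.mono (Ioi_subset_Ioi zero_le_one)).div
          ((continuousOn_id.pow 2).add continuousOn_const)
          (fun x hx => (add_pos_of_nonneg_of_pos (sq_nonneg _) one_pos).ne')).aestronglyMeasurable measurableSet_Ioi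
      · rw [ae_restrict_iff' measurableSet_Ioi]
        filter_upwards with l hl
        have hl0 : (0:ℝ) < l := lt_trans one_pos hl
        have hl2 : (0:ℝ) < l^2 := by positivity
        rw [norm_div, Real.norm_eq_abs, Real.norm_eq_abs,
          abs_of_pos (show (0:ℝ) < l^2+1 by positivity)]
        calc |μ' l| / (l^2+1) ≤ (C2 * l ^ (q-p)) / l^2 :=
              div_le_div₀ (by positivity) (hb2 l hl) hl2 (by linarith)
          _ = C2 * l ^ (q-p-2) := by
              rw [show (l:ℝ)^2 = l ^ ((2:ℕ):ℝ) from (Real.rpow_natCast l 2).symm,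
                mul_div_assoc, ← Real.rpow_sub hl0]
              norm_num
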